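/- Suppose A₁, …, A_ℓ is a sequence of distinct strictly k-balanced k-uniform hypergraphs with common k-density ρ that forms a self-avoiding cyclic walk. Let S := A₁ + … + A_ℓ. Then there exists an edge e ∈ S with ρ_{S,e} > ρ. -/

import Mathlib

open Finset

/-- The vertex set (support) of a hypergraph given by its edge set. -/
def verts (A : Finset (Finset ℕ)) : Finset ℕ := A.sup id

/-- The edge set of the induced subhypergraph `A[U]`. -/
def ind (A : Finset (Finset ℕ)) (U : Finset ℕ) : Finset (Finset ℕ) := A.filter (· ⊆ U)

/-- The density of the template `(A[U], I)`, where `A[U]` carries the vertex set `U`: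
`(e(A[U]) - e(A[I])) / (|U| - |I|)`, and `0` if `U = I`. -/
def dens (A : Finset (Finset ℕ)) (U I : Finset ℕ) : ℚ :=
  if U = I then 0
  else (((ind A U).card : ℚ) - ((ind A I).card : ℚ)) / ((U.card : ℚ) - (I.card : ℚ))

/-- The density `ρ_{A,I}` of the template `(A, I)` (whose vertex set is `verts A ∪ I`). -/
def tdens (A : Finset (Finset ℕ)) (I : Finset ℕ) : ℚ := dens A (verts A ∪ I) I

/-- The `k`-density `ρ_A = (e(A) - 1)/(v(A) - k)` of a `k`-uniform hypergraph. -/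
def kdens (k : ℕ) (A : Finset (Finset ℕ)) : ℚ :=
  ((A.card : ℚ) - 1) / (((verts A).card : ℚ) - (k : ℚ))

/-- The template `(A, I)` is strictly balanced: every proper subtemplate `(B, I) ⊆ (A, I)`
(`B = A[U]` with vertex set `U`, `I ⊆ U`, `V(B) = U ≠ I`, `B ≠ A`) has strictly smaller
density. -/
def StrictBalT (A : Finset (Finset ℕ)) (I : Finset ℕ) : Prop :=
  ∀ U : Finset ℕ, I ⊆ U → U ⊂ verts A ∪ I → U ≠ I → dens A U I < tdens A I

/-- `A 0, …, A (n-1)` is a self-avoiding cyclic walk: the hypergraphs are distinct and there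
are distinct edges `e 0, …, e (n-1)` with `e i ∈ A i ∩ A ((i+1) % n)` for all `i < n`. -/
def IsSACW (n : ℕ) (A : ℕ → Finset (Finset ℕ)) : Prop :=
  2 ≤ n ∧ (∀ i < n, ∀ j < n, A i = A j → i = j) ∧
    ∃ e : ℕ → Finset ℕ,
      (∀ i < n, ∀ j < n, e i = e j → i = j) ∧
      ∀ i < n, e i ∈ A i ∧ e i ∈ A ((i + 1) % n)

/-- `A` is strictly `k`-balanced: it has at least three edges and every proper subgraph with
at least two edges has strictly smaller `k`-density. -/
def StrictlyKBalanced (k : ℕ) (A : Finset (Finset ℕ)) : Prop :=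
  3 ≤ A.card ∧ ∀ G ⊂ A, 2 ≤ G.card → kdens k G < kdens k A

/-- if distinct strictly `k`-balanced `k`-graphs `A 0, …, A (n-1)`, all of
`k`-density `ρ`, form a self-avoiding cyclic walk, then their union `S` has an edge `e` with
`ρ_{S,e} > ρ`. -/
-- basics
lemma verts_mono {A B : Finset (Finset ℕ)} (h : A ⊆ B) : verts A ⊆ verts B :=
  le_iff_subset.mp (Finset.sup_mono h)

lemma subset_verts {A : Finset (Finset ℕ)} {e : Finset ℕ} (h : e ∈ A) : e ⊆ verts A :=
  le_iff_subset.mp (Finset.le_sup (f := id) h)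

lemma verts_union (A B : Finset (Finset ℕ)) : verts (A ∪ B) = verts A ∪ verts B :=
  Finset.sup_union

lemma verts_singleton (e : Finset ℕ) : verts {e} = e := Finset.sup_singleton

lemma verts_insert (f : Finset ℕ) (A : Finset (Finset ℕ)) :
    verts (insert f A) = f ∪ verts A := Finset.sup_insert

lemma verts_pair (x y : Finset ℕ) : verts {x, y} = x ∪ y := by
  rw [verts_insert, verts_singleton]

lemma verts_card_ge {k : ℕ} {G : Finset (Finset ℕ)}
    (hu : ∀ x ∈ G, x.card = k) (h2 : 2 ≤ G.card) : k + 1 ≤ (verts G).card := by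
  obtain ⟨x, hx, y, hy, hxy⟩ := Finset.one_lt_card.mp h2
  have hsub : x ∪ y ⊆ verts G := Finset.union_subset (subset_verts hx) (subset_verts hy)
  have hx' : x ⊂ x ∪ y := by
    refine ⟨Finset.subset_union_left, fun hc => hxy ?_⟩
    have : y ⊆ x := (Finset.union_subset_iff.mp hc).2
    exact (Finset.eq_of_subset_of_card_le this (by rw [hu x hx, hu y hy])).symm
  calc k + 1 = x.card + 1 := by rw [hu x hx]
    _ ≤ (x ∪ y).card := Finset.card_lt_card hx'
    _ ≤ (verts G).card := Finset.card_le_card hsub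

/-- All hypotheses about members of the family, with the density equation linearized. -/
def Nice (k : ℕ) (ρ : ℚ) (B : Finset (Finset ℕ)) : Prop :=
  (∀ x ∈ B, x.card = k) ∧ 3 ≤ B.card ∧
    (∀ G ⊂ B, 2 ≤ G.card → kdens k G < ρ) ∧
    ((B.card : ℚ) - 1 = ρ * (((verts B).card : ℚ) - (k : ℚ))) ∧
    (k : ℕ) + 1 ≤ (verts B).card

lemma nice_of {k : ℕ} {ρ : ℚ} {B : Finset (Finset ℕ)}
    (hu : ∀ x ∈ B, x.card = k) (hsb : 3 ≤ B.card ∧ ∀ G ⊂ B, 2 ≤ G.card → kdens k G < kdens k B)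
    (hd : kdens k B = ρ) : Nice k ρ B := by
  have hv : k + 1 ≤ (verts B).card := verts_card_ge hu (le_trans (by norm_num) hsb.1)
  have hvq : (0:ℚ) < ((verts B).card : ℚ) - k := by
    have : (k:ℚ) + 1 ≤ ((verts B).card : ℚ) := by exact_mod_cast hv
    linarith
  refine ⟨hu, hsb.1, fun G hG h2 => hd ▸ hsb.2 G hG h2, ?_, hv⟩
  have := hd
  rw [kdens, div_eq_iff (ne_of_gt hvq)] at this
  linarith [this]

lemma rho_pos {k : ℕ} {ρ : ℚ} {B : Finset (Finset ℕ)} (hN : Nice k ρ B) : 0 < ρ := by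
  obtain ⟨-, h3, -, heq, hv⟩ := hN
  have h3' : (3:ℚ) ≤ (B.card : ℚ) := by exact_mod_cast h3
  have hv' : (k:ℚ) + 1 ≤ ((verts B).card : ℚ) := by exact_mod_cast hv
  nlinarith

lemma pair_bound {k : ℕ} {ρ : ℚ} {B : Finset (Finset ℕ)} (hN : Nice k ρ B)
    {x y : Finset ℕ} (hx : x ∈ B) (hy : y ∈ B) (hxy : x ≠ y) :
    1 < ρ * ((k : ℚ) - ((x ∩ y).card : ℚ)) := by
  obtain ⟨hu, h3, hsb, -, -⟩ := hN
  have hP : ({x, y} : Finset (Finset ℕ)) ⊂ B := by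
    refine Finset.ssubset_iff_subset_ne.mpr ⟨?_, ?_⟩
    · intro z hz; rcases Finset.mem_insert.mp hz with rfl | hz
      · exact hx
      · rw [Finset.mem_singleton.mp hz]; exact hy
    · intro hc
      have : ({x, y} : Finset (Finset ℕ)).card = 2 := Finset.card_pair hxy
      rw [hc] at this; omega
  have hcard : ({x, y} : Finset (Finset ℕ)).card = 2 := Finset.card_pair hxy
  have hkd := hsb _ hP (by rw [hcard])
  have hxk := hu x hx
  have hyk := hu y hy
  -- cardinality of union
  have hcui : (x ∪ y).card + (x ∩ y).card = x.card + y.card := Finset.card_union_add_card_inter x y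
  have hilt : (x ∩ y).card < k := by
    rcases Nat.lt_or_ge (x ∩ y).card k with h | h
    · exact h
    · exfalso
      have hsubx : x ∩ y ⊆ x := Finset.inter_subset_left
      have : x ∩ y = x := Finset.eq_of_subset_of_card_le hsubx (by omega)
      have hxy' : x ⊆ y := by rw [← this]; exact Finset.inter_subset_right
      exact hxy (Finset.eq_of_subset_of_card_le hxy' (by omega))
  have hvP : verts {x, y} = x ∪ y := verts_pair x y
  rw [kdens, hcard, hvP] at hkd
  have hcu : ((x ∪ y).card : ℚ) = (k : ℚ) + (k : ℚ) - ((x ∩ y).card : ℚ) := by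
    have : ((x ∪ y).card : ℚ) + ((x ∩ y).card : ℚ) = (x.card : ℚ) + (y.card : ℚ) := by
      exact_mod_cast hcui
    rw [hxk, hyk] at this; push_cast at this ⊢; linarith
  rw [hcu] at hkd
  have hden : (0:ℚ) < (k:ℚ) - ((x ∩ y).card : ℚ) := by
    have : ((x ∩ y).card : ℚ) < (k : ℚ) := by exact_mod_cast hilt
    linarith
  have : ((2:ℚ) - 1) / ((k:ℚ) + (k:ℚ) - ((x ∩ y).card : ℚ) - (k:ℚ)) < ρ := by
    convert hkd using 2
    norm_num
  rw [div_lt_iff₀ (by linarith : (0:ℚ) < (k:ℚ) + (k:ℚ) - ((x ∩ y).card : ℚ) - (k:ℚ))] at this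
  nlinarith

lemma rho_k_gt {k : ℕ} {ρ : ℚ} {B : Finset (Finset ℕ)} (hN : Nice k ρ B) :
    1 < ρ * (k : ℚ) := by
  obtain ⟨x, hx, y, hy, hxy⟩ := Finset.one_lt_card.mp (lt_of_lt_of_le (by norm_num) hN.2.1)
  have h := pair_bound hN hx hy hxy
  have hρ := rho_pos hN
  have : (0:ℚ) ≤ ((x ∩ y).card : ℚ) := by positivity
  nlinarith

lemma sb_lt {k : ℕ} {ρ : ℚ} {B G : Finset (Finset ℕ)} (hN : Nice k ρ B)
    (hG : G ⊂ B) (h2 : 2 ≤ G.card) :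
    (G.card : ℚ) - 1 < ρ * (((verts G).card : ℚ) - (k : ℚ)) := by
  obtain ⟨hu, h3, hsb, -, -⟩ := hN
  have hkd := hsb G hG h2
  have hv : k + 1 ≤ (verts G).card :=
    verts_card_ge (fun x hx => hu x (hG.1 hx)) h2
  have hvq : (0:ℚ) < ((verts G).card : ℚ) - (k:ℚ) := by
    have : (k:ℚ) + 1 ≤ ((verts G).card : ℚ) := by exact_mod_cast hv
    linarith
  rw [kdens, div_lt_iff₀ hvq] at hkd
  linarith

lemma sb_le {k : ℕ} {ρ : ℚ} {B G : Finset (Finset ℕ)} (hN : Nice k ρ B)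
    (hG : G ⊆ B) (hne : G.Nonempty) :
    (G.card : ℚ) - 1 ≤ ρ * (((verts G).card : ℚ) - (k : ℚ)) := by
  rcases Nat.lt_or_ge G.card 2 with h1 | h2
  · have hc1 : G.card = 1 := by
      have := Finset.card_pos.mpr hne; omega
    obtain ⟨x, hx⟩ := Finset.card_eq_one.mp hc1
    subst hx
    rw [verts_singleton]
    have : x.card = k := hN.1 x (hG (Finset.mem_singleton_self x))
    rw [Finset.card_singleton, this]
    simp
  · rcases eq_or_ne G B with rfl | hne'
    · exact le_of_eq hN.2.2.2.1
    · exact le_of_lt (sb_lt hN (Finset.ssubset_iff_subset_ne.mpr ⟨hG, hne'⟩) h2)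

lemma no_proper_nice {k : ℕ} {ρ : ℚ} {B C : Finset (Finset ℕ)}
    (hB : Nice k ρ B) (hC : Nice k ρ C) (h : B ⊂ C) : False := by
  have h1 := sb_lt hC h (le_trans (by norm_num) hB.2.1)
  have h2 := hB.2.2.2.1
  linarith

lemma nice_unif {k : ℕ} {ρ : ℚ} {B : Finset (Finset ℕ)} (hN : Nice k ρ B) :
    ∀ x ∈ B, x.card = k := hN.1

lemma nice_card {k : ℕ} {ρ : ℚ} {B : Finset (Finset ℕ)} (hN : Nice k ρ B) :
    3 ≤ B.card := hN.2.1

lemma nice_eq {k : ℕ} {ρ : ℚ} {B : Finset (Finset ℕ)} (hN : Nice k ρ B) :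
    (B.card : ℚ) - 1 = ρ * (((verts B).card : ℚ) - (k : ℚ)) := hN.2.2.2.1

/-- The "excess" potential. -/
def EE (k : ℕ) (ρ : ℚ) (T : Finset (Finset ℕ)) : ℚ :=
  ((T.card : ℚ) - 1) - ρ * (((verts T).card : ℚ) - (k : ℚ))

lemma step_eq {k : ℕ} {ρ : ℚ} {B : Finset (Finset ℕ)} (hN : Nice k ρ B)
    (T : Finset (Finset ℕ)) :
    EE k ρ (T ∪ B) = EE k ρ T +
      (ρ * (((verts B ∩ verts T).card : ℚ) - (k : ℚ)) - (((B ∩ T).card : ℚ) - 1)) := by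
  have hcard : ((T ∪ B).card : ℚ) + ((B ∩ T).card : ℚ) = (T.card : ℚ) + (B.card : ℚ) := by
    rw [Finset.inter_comm]
    exact_mod_cast Finset.card_union_add_card_inter T B
  have hverts : ((verts (T ∪ B)).card : ℚ) + ((verts B ∩ verts T).card : ℚ)
      = ((verts T).card : ℚ) + ((verts B).card : ℚ) := by
    rw [verts_union, Finset.inter_comm]
    exact_mod_cast Finset.card_union_add_card_inter (verts T) (verts B)
  have hB := nice_eq hN
  unfold EE
  linear_combination hcard - ρ * hverts + hB

lemma step_core {k : ℕ} {ρ : ℚ} {B : Finset (Finset ℕ)} (hN : Nice k ρ B)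
    {T : Finset (Finset ℕ)} (hsh : (B ∩ T).Nonempty) :
    (0:ℚ) ≤ ρ * (((verts B ∩ verts T).card : ℚ) - (k : ℚ)) - (((B ∩ T).card : ℚ) - 1) := by
  have hρ := rho_pos hN
  have hD := sb_le hN (Finset.inter_subset_left : B ∩ T ⊆ B) hsh
  have hvD : (((verts (B ∩ T)).card : ℚ)) ≤ ((verts B ∩ verts T).card : ℚ) := by
    have hsub : verts (B ∩ T) ⊆ verts B ∩ verts T :=
      Finset.subset_inter (verts_mono Finset.inter_subset_left)
        (verts_mono Finset.inter_subset_right)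
    exact_mod_cast Finset.card_le_card hsub
  nlinarith

lemma step_ge {k : ℕ} {ρ : ℚ} {B : Finset (Finset ℕ)} (hN : Nice k ρ B)
    {T : Finset (Finset ℕ)} (hsh : (B ∩ T).Nonempty) :
    EE k ρ T ≤ EE k ρ (T ∪ B) := by
  rw [step_eq hN T]
  have := step_core hN hsh
  linarith

lemma step_gt {k : ℕ} {ρ : ℚ} {B : Finset (Finset ℕ)} (hN : Nice k ρ B)
    {T : Finset (Finset ℕ)} (hproper : B ∩ T ⊂ B) (h2 : 2 ≤ (B ∩ T).card) :
    EE k ρ T < EE k ρ (T ∪ B) := by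
  rw [step_eq hN T]
  have hρ := rho_pos hN
  have hD := sb_lt hN hproper h2
  have hvD : (((verts (B ∩ T)).card : ℚ)) ≤ ((verts B ∩ verts T).card : ℚ) := by
    have hsub : verts (B ∩ T) ⊆ verts B ∩ verts T :=
      Finset.subset_inter (verts_mono Finset.inter_subset_left)
        (verts_mono Finset.inter_subset_right)
    exact_mod_cast Finset.card_le_card hsub
  nlinarith

lemma chain_ge {k : ℕ} {ρ : ℚ} (T₀ : Finset (Finset ℕ)) (g : ℕ → Finset (Finset ℕ))
    (len : ℕ) (hN : ∀ i < len, Nice k ρ (g i))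
    (hsh : ∀ i < len, (g i ∩ (T₀ ∪ (Finset.range i).biUnion g)).Nonempty) :
    EE k ρ T₀ ≤ EE k ρ (T₀ ∪ (Finset.range len).biUnion g) := by
  induction len with
  | zero => simp
  | succ m ih =>
    have h1 : EE k ρ T₀ ≤ EE k ρ (T₀ ∪ (Finset.range m).biUnion g) :=
      ih (fun i hi => hN i (Nat.lt_succ_of_lt hi)) (fun i hi => hsh i (Nat.lt_succ_of_lt hi))
    have h2 : EE k ρ (T₀ ∪ (Finset.range m).biUnion g)
        ≤ EE k ρ ((T₀ ∪ (Finset.range m).biUnion g) ∪ g m) :=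
      step_ge (hN m (Nat.lt_succ_self m)) (hsh m (Nat.lt_succ_self m))
    have heq : (T₀ ∪ (Finset.range m).biUnion g) ∪ g m
        = T₀ ∪ (Finset.range (m+1)).biUnion g := by
      rw [Finset.range_add_one, Finset.biUnion_insert, Finset.union_assoc,
        Finset.union_comm (g m)]
    rw [heq] at h2
    linarith

lemma extract {k : ℕ} {ρ : ℚ} {B T : Finset (Finset ℕ)} (hN : Nice k ρ B)
    (hzero : EE k ρ (T ∪ B) = EE k ρ T) {d : Finset ℕ} (hd : d ∈ B ∩ T) :
    B ⊆ T ∨ (B ∩ T = {d} ∧ verts B ∩ verts T = d) := by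
  have hX : ρ * (((verts B ∩ verts T).card : ℚ) - (k : ℚ)) - (((B ∩ T).card : ℚ) - 1) = 0 := by
    have := step_eq hN T
    rw [hzero] at this; linarith
  by_cases hfull : B ⊆ T
  · exact Or.inl hfull
  right
  have hρ := rho_pos hN
  have hproper : B ∩ T ⊂ B := by
    refine Finset.ssubset_iff_subset_ne.mpr ⟨Finset.inter_subset_left, fun hc => hfull ?_⟩
    intro x hx
    have : x ∈ B ∩ T := by rw [hc]; exact hx
    exact (Finset.mem_inter.mp this).2
  have hvD : (((verts (B ∩ T)).card : ℚ)) ≤ ((verts B ∩ verts T).card : ℚ) := by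
    have hsub : verts (B ∩ T) ⊆ verts B ∩ verts T :=
      Finset.subset_inter (verts_mono Finset.inter_subset_left)
        (verts_mono Finset.inter_subset_right)
    exact_mod_cast Finset.card_le_card hsub
  have hcard1 : (B ∩ T).card = 1 := by
    by_contra hne1
    have h2 : 2 ≤ (B ∩ T).card := by
      have : 1 ≤ (B ∩ T).card := Finset.card_pos.mpr ⟨d, hd⟩
      omega
    have := sb_lt hN hproper h2
    nlinarith
  have hDd : B ∩ T = {d} := by
    obtain ⟨x, hx⟩ := Finset.card_eq_one.mp hcard1
    rw [hx] at hd ⊢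
    rw [Finset.mem_singleton.mp hd]
  constructor
  · exact hDd
  · -- verts B ∩ verts T = d
    have hw : ((verts B ∩ verts T).card : ℚ) = (k : ℚ) := by
      rw [hDd] at hX
      simp at hX
      rcases hX with h | h
      · exact absurd h (ne_of_gt hρ)
      · linarith
    have hwk : (verts B ∩ verts T).card = k := by exact_mod_cast hw
    have hdsub : d ⊆ verts B ∩ verts T := by
      have : verts (B ∩ T) ⊆ verts B ∩ verts T :=
        Finset.subset_inter (verts_mono Finset.inter_subset_left)
          (verts_mono Finset.inter_subset_right)
      rw [hDd, verts_singleton] at this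
      exact this
    have hdk : d.card = k := nice_unif hN d (Finset.mem_inter.mp hd).1
    exact (Finset.eq_of_subset_of_card_le hdsub (by omega)).symm

/-- partial unions -/
def Sset (A : ℕ → Finset (Finset ℕ)) (j : ℕ) : Finset (Finset ℕ) :=
  (Finset.range j).biUnion A

lemma Sset_succ (A : ℕ → Finset (Finset ℕ)) (j : ℕ) :
    Sset A (j+1) = Sset A j ∪ A j := by
  unfold Sset
  rw [Finset.range_add_one, Finset.biUnion_insert, Finset.union_comm]

lemma mem_Sset {A : ℕ → Finset (Finset ℕ)} {i j : ℕ} (h : i < j) :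
    A i ⊆ Sset A j := fun x hx => Finset.mem_biUnion.mpr ⟨i, Finset.mem_range.mpr h, hx⟩

lemma reduce (k : ℕ) (ρ : ℚ) (n m j₂ c₁ : ℕ) (A : ℕ → Finset (Finset ℕ)) (e : ℕ → Finset ℕ)
    (f' f'' : Finset ℕ)
    (IH : ∀ n' < n, 2 ≤ n' → ∀ (A' : ℕ → Finset (Finset ℕ)) (e' : ℕ → Finset ℕ),
      (∀ i < n', Nice k ρ (A' i)) →
      (∀ i < n', ∀ j < n', A' i = A' j → i = j) →
      (∀ i < n', ∀ j < n', e' i = e' j → i = j) →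
      (∀ i < n', e' i ∈ A' i ∧ e' i ∈ A' ((i + 1) % n')) →
      0 < EE k ρ ((Finset.range n').biUnion A'))
    (hN : ∀ i < n, Nice k ρ (A i))
    (hAinj : ∀ i < n, ∀ j < n, A i = A j → i = j)
    (heinj : ∀ i < n, ∀ j < n, e i = e j → i = j)
    (hwalkA : ∀ i < n, e i ∈ A i)
    (hwalkB : ∀ i, i + 1 < n → e i ∈ A (i + 1))
    (hmn : m < n) (hcj : c₁ ≤ j₂) (hj₂m : j₂ < m)
    (hred : j₂ - c₁ + 2 < n)
    (hf'm : f' ∈ A m) (hf'c : f' ∈ A c₁)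
    (hf''2 : f'' ∈ A j₂) (hf''m : f'' ∈ A m) (hf''S : f'' ∉ Sset A j₂)
    (hf'S : f' ∈ Sset A j₂)
    (hf'ne : ∀ l, c₁ ≤ l → l < j₂ → f' ≠ e l)
    (hcon : EE k ρ (Sset A n) ≤ 0) : False := by
  classical
  set ℓ := j₂ - c₁ + 2 with hℓdef
  have hℓ2 : 2 ≤ ℓ := by omega
  have hℓn : ℓ < n := hred
  have hc₁ℓ : c₁ + (ℓ - 2) = j₂ := by omega
  set B : ℕ → Finset (Finset ℕ) := fun i => if i = ℓ - 1 then A m else A (c₁ + i) with hBdef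
  set ε : ℕ → Finset ℕ :=
    fun i => if i = ℓ - 1 then f' else if i = ℓ - 2 then f'' else e (c₁ + i) with hεdef
  -- basic B values
  have hBlast : B (ℓ - 1) = A m := by
    show (if ℓ - 1 = ℓ - 1 then A m else A (c₁ + (ℓ - 1))) = A m
    rw [if_pos rfl]
  have hBpath : ∀ i, i < ℓ - 1 → B i = A (c₁ + i) := by
    intro i hi
    have h1 : i ≠ ℓ - 1 := by omega
    show (if i = ℓ - 1 then A m else A (c₁ + i)) = A (c₁ + i)
    rw [if_neg h1]
  have hBj₂ : B (ℓ - 2) = A j₂ := by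
    rw [hBpath (ℓ - 2) (by omega), hc₁ℓ]
  have hB0 : B 0 = A c₁ := by
    rw [hBpath 0 (by omega), Nat.add_zero]
  have hεlast : ε (ℓ - 1) = f' := by
    show (if ℓ - 1 = ℓ - 1 then f' else if ℓ - 1 = ℓ - 2 then f'' else e (c₁ + (ℓ - 1))) = f'
    rw [if_pos rfl]
  have hε2 : ε (ℓ - 2) = f'' := by
    have h1 : ℓ - 2 ≠ ℓ - 1 := by omega
    show (if ℓ - 2 = ℓ - 1 then f' else if ℓ - 2 = ℓ - 2 then f'' else e (c₁ + (ℓ - 2))) = f''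
    rw [if_neg h1, if_pos rfl]
  have hεpath : ∀ i, i < ℓ - 2 → ε i = e (c₁ + i) := by
    intro i hi
    have h1 : i ≠ ℓ - 1 := by omega
    have h2 : i ≠ ℓ - 2 := by omega
    show (if i = ℓ - 1 then f' else if i = ℓ - 2 then f'' else e (c₁ + i)) = e (c₁ + i)
    rw [if_neg h1, if_neg h2]
  -- e l is in Sset A j₂ for l < j₂
  have heS : ∀ l, l < j₂ → e l ∈ Sset A j₂ := fun l hl =>
    mem_Sset hl (hwalkA l (by omega))
  have hf'f'' : f' ≠ f'' := fun hc => hf''S (hc ▸ hf'S)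
  have hfne'' : ∀ l, l < j₂ → f'' ≠ e l := fun l hl hc => hf''S (hc ▸ heS l hl)
  -- Nice
  have hBN : ∀ i < ℓ, Nice k ρ (B i) := by
    intro i hi
    by_cases h1 : i = ℓ - 1
    · rw [h1, hBlast]; exact hN m hmn
    · rw [hBpath i (by omega)]; exact hN (c₁ + i) (by omega)
  -- injectivity of B
  have hBinj : ∀ i < ℓ, ∀ j < ℓ, B i = B j → i = j := by
    intro i hi j hj heq
    by_cases h1 : i = ℓ - 1 <;> by_cases h2 : j = ℓ - 1
    · omega
    · rw [h1, hBlast, hBpath j (by omega)] at heq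
      have := hAinj m hmn (c₁ + j) (by omega) heq
      omega
    · rw [h2, hBlast, hBpath i (by omega)] at heq
      have := hAinj (c₁ + i) (by omega) m hmn heq
      omega
    · rw [hBpath i (by omega), hBpath j (by omega)] at heq
      have := hAinj (c₁ + i) (by omega) (c₁ + j) (by omega) heq
      omega
  -- injectivity of ε
  have hεinj : ∀ i < ℓ, ∀ j < ℓ, ε i = ε j → i = j := by
    have key : ∀ i < ℓ, ∀ j < ℓ, i < j → ε i ≠ ε j := by
      intro i hi j hj hij
      by_cases h2 : j = ℓ - 1
      · -- ε j = f'
        rw [h2, hεlast]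
        by_cases h1 : i = ℓ - 2
        · rw [h1, hε2]; exact fun hc => hf'f'' hc.symm
        · rw [hεpath i (by omega)]
          exact fun hc => hf'ne (c₁ + i) (by omega) (by omega) hc.symm
      · by_cases h2' : j = ℓ - 2
        · rw [h2', hε2, hεpath i (by omega)]
          exact fun hc => hfne'' (c₁ + i) (by omega) hc.symm
        · rw [hεpath i (by omega), hεpath j (by omega)]
          intro hc
          have := heinj (c₁ + i) (by omega) (c₁ + j) (by omega) hc
          omega
    intro i hi j hj heq
    rcases Nat.lt_trichotomy i j with h | h | h
    · exact absurd heq (key i hi j hj h)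
    · exact h
    · exact absurd heq.symm (key j hj i hi h)
  -- walk property
  have hBwalk : ∀ i < ℓ, ε i ∈ B i ∧ ε i ∈ B ((i + 1) % ℓ) := by
    intro i hi
    by_cases h1 : i = ℓ - 1
    · subst h1
      have hmod : (ℓ - 1 + 1) % ℓ = 0 := by
        have : ℓ - 1 + 1 = ℓ := by omega
        rw [this, Nat.mod_self]
      rw [hεlast, hBlast, hmod, hB0]
      exact ⟨hf'm, hf'c⟩
    · by_cases h2 : i = ℓ - 2
      · subst h2
        have hmod : (ℓ - 2 + 1) % ℓ = ℓ - 1 := by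
          have h3 : ℓ - 2 + 1 = ℓ - 1 := by omega
          rw [h3, Nat.mod_eq_of_lt (by omega)]
        rw [hε2, hBj₂, hmod, hBlast]
        exact ⟨hf''2, hf''m⟩
      · have hi2 : i < ℓ - 2 := by omega
        have hmod : (i + 1) % ℓ = i + 1 := Nat.mod_eq_of_lt (by omega)
        rw [hεpath i hi2, hmod, hBpath i (by omega), hBpath (i+1) (by omega)]
        constructor
        · exact hwalkA (c₁ + i) (by omega)
        · have := hwalkB (c₁ + i) (by omega)
          have harith : c₁ + i + 1 = c₁ + (i + 1) := by omega
          rwa [harith] at this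
  -- apply the induction hypothesis
  set T₀ : Finset (Finset ℕ) := (Finset.range ℓ).biUnion B with hT₀def
  have hpos : 0 < EE k ρ T₀ := IH ℓ hℓn hℓ2 B ε hBN hBinj hεinj hBwalk
  -- membership helpers
  have hsubT₀ : ∀ i < ℓ, B i ⊆ T₀ := fun i hi =>
    fun x hx => Finset.mem_biUnion.mpr ⟨i, Finset.mem_range.mpr hi, hx⟩
  have hAmT : A m ⊆ T₀ := by rw [← hBlast]; exact hsubT₀ (ℓ-1) (by omega)
  have hAj₂T : A j₂ ⊆ T₀ := by rw [← hBj₂]; exact hsubT₀ (ℓ-2) (by omega)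
  have hAcT : A c₁ ⊆ T₀ := by rw [← hB0]; exact hsubT₀ 0 (by omega)
  -- the three extension phases
  set len₁ := m - 1 - j₂ with hlen₁
  set g₁ : ℕ → Finset (Finset ℕ) := fun i => A (j₂ + 1 + i) with hg₁
  set T₁ := T₀ ∪ (Finset.range len₁).biUnion g₁ with hT₁def
  set len₂ := n - 1 - m with hlen₂
  set g₂ : ℕ → Finset (Finset ℕ) := fun i => A (m + 1 + i) with hg₂
  set T₂ := T₁ ∪ (Finset.range len₂).biUnion g₂ with hT₂def
  set len₃ := c₁ with hlen₃
  set g₃ : ℕ → Finset (Finset ℕ) := fun i => A (c₁ - 1 - i) with hg₃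
  set T₃ := T₂ ∪ (Finset.range len₃).biUnion g₃ with hT₃def
  have h1 : EE k ρ T₀ ≤ EE k ρ T₁ := by
    apply chain_ge
    · intro i hi; exact hN (j₂ + 1 + i) (by omega)
    · intro i hi
      refine ⟨e (j₂ + i), Finset.mem_inter.mpr ⟨?_, ?_⟩⟩
      · have := hwalkB (j₂ + i) (by omega)
        have harith : j₂ + i + 1 = j₂ + 1 + i := by omega
        rw [harith] at this
        exact this
      · rcases Nat.eq_zero_or_pos i with rfl | hi0
        · exact Finset.mem_union_left _ (hAj₂T (by simpa using hwalkA j₂ (by omega)))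
        · refine Finset.mem_union_right _ (Finset.mem_biUnion.mpr ⟨i - 1, Finset.mem_range.mpr (by omega), ?_⟩)
          have harith : j₂ + 1 + (i - 1) = j₂ + i := by omega
          show e (j₂ + i) ∈ A (j₂ + 1 + (i - 1))
          rw [harith]
          exact hwalkA (j₂ + i) (by omega)
  have h2 : EE k ρ T₁ ≤ EE k ρ T₂ := by
    apply chain_ge
    · intro i hi; exact hN (m + 1 + i) (by omega)
    · intro i hi
      refine ⟨e (m + i), Finset.mem_inter.mpr ⟨?_, ?_⟩⟩
      · have := hwalkB (m + i) (by omega)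
        have harith : m + i + 1 = m + 1 + i := by omega
        rw [harith] at this
        exact this
      · rcases Nat.eq_zero_or_pos i with rfl | hi0
        · exact Finset.mem_union_left _
            (Finset.mem_union_left _ (hAmT (by simpa using hwalkA m (by omega))))
        · refine Finset.mem_union_right _ (Finset.mem_biUnion.mpr ⟨i - 1, Finset.mem_range.mpr (by omega), ?_⟩)
          have harith : m + 1 + (i - 1) = m + i := by omega
          show e (m + i) ∈ A (m + 1 + (i - 1))
          rw [harith]
          exact hwalkA (m + i) (by omega)
  have h3 : EE k ρ T₂ ≤ EE k ρ T₃ := by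
    apply chain_ge
    · intro i hi; exact hN (c₁ - 1 - i) (by omega)
    · intro i hi
      refine ⟨e (c₁ - 1 - i), Finset.mem_inter.mpr ⟨?_, ?_⟩⟩
      · exact hwalkA (c₁ - 1 - i) (by omega)
      · rcases Nat.eq_zero_or_pos i with rfl | hi0
        · refine Finset.mem_union_left _ (Finset.mem_union_left _
            (Finset.mem_union_left _ (hAcT ?_)))
          have := hwalkB (c₁ - 1) (by omega)
          have harith : c₁ - 1 + 1 = c₁ := by omega
          rwa [harith] at this
        · refine Finset.mem_union_right _ (Finset.mem_biUnion.mpr ⟨i - 1, Finset.mem_range.mpr (by omega), ?_⟩)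
          have harith : c₁ - 1 - (i - 1) = c₁ - i := by omega
          show e (c₁ - 1 - i) ∈ A (c₁ - 1 - (i - 1))
          rw [harith]
          have := hwalkB (c₁ - 1 - i) (by omega)
          have harith2 : c₁ - 1 - i + 1 = c₁ - i := by omega
          rwa [harith2] at this
  -- T₃ equals the whole union
  have hT₃eq : T₃ = Sset A n := by
    apply Finset.Subset.antisymm
    · intro x hx
      rcases Finset.mem_union.mp hx with hx | hx
      · rcases Finset.mem_union.mp hx with hx | hx
        · rcases Finset.mem_union.mp hx with hx | hx
          · obtain ⟨i, hi, hxi⟩ := Finset.mem_biUnion.mp hx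
            rw [Finset.mem_range] at hi
            by_cases h1 : i = ℓ - 1
            · rw [h1, hBlast] at hxi; exact mem_Sset hmn hxi
            · rw [hBpath i (by omega)] at hxi; exact mem_Sset (by omega) hxi
          · obtain ⟨i, hi, hxi⟩ := Finset.mem_biUnion.mp hx
            rw [Finset.mem_range] at hi
            exact mem_Sset (show j₂ + 1 + i < n by omega) hxi
        · obtain ⟨i, hi, hxi⟩ := Finset.mem_biUnion.mp hx
          rw [Finset.mem_range] at hi
          exact mem_Sset (show m + 1 + i < n by omega) hxi
      · obtain ⟨i, hi, hxi⟩ := Finset.mem_biUnion.mp hx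
        rw [Finset.mem_range] at hi
        exact mem_Sset (show c₁ - 1 - i < n by omega) hxi
    · intro x hx
      obtain ⟨i, hi, hxi⟩ := Finset.mem_biUnion.mp hx
      rw [Finset.mem_range] at hi
      by_cases hc1 : i < c₁
      · refine Finset.mem_union_right _ (Finset.mem_biUnion.mpr ⟨c₁ - 1 - i, Finset.mem_range.mpr (by omega), ?_⟩)
        show x ∈ A (c₁ - 1 - (c₁ - 1 - i))
        have harith : c₁ - 1 - (c₁ - 1 - i) = i := by omega
        rw [harith]; exact hxi
      · by_cases hc2 : i ≤ j₂
        · refine Finset.mem_union_left _ (Finset.mem_union_left _ (Finset.mem_union_left _ ?_))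
          refine Finset.mem_biUnion.mpr ⟨i - c₁, Finset.mem_range.mpr (by omega), ?_⟩
          rw [hBpath (i - c₁) (by omega)]
          have harith : c₁ + (i - c₁) = i := by omega
          rw [harith]; exact hxi
        · by_cases hc3 : i < m
          · refine Finset.mem_union_left _ (Finset.mem_union_left _ (Finset.mem_union_right _ ?_))
            refine Finset.mem_biUnion.mpr ⟨i - (j₂ + 1), Finset.mem_range.mpr (by omega), ?_⟩
            show x ∈ A (j₂ + 1 + (i - (j₂ + 1)))
            have harith : j₂ + 1 + (i - (j₂ + 1)) = i := by omega
            rw [harith]; exact hxi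
          · by_cases hc4 : i = m
            · subst hc4
              exact Finset.mem_union_left _ (Finset.mem_union_left _
                (Finset.mem_union_left _ (hAmT hxi)))
            · refine Finset.mem_union_left _ (Finset.mem_union_right _ ?_)
              refine Finset.mem_biUnion.mpr ⟨i - (m + 1), Finset.mem_range.mpr (by omega), ?_⟩
              show x ∈ A (m + 1 + (i - (m + 1)))
              have harith : m + 1 + (i - (m + 1)) = i := by omega
              rw [harith]; exact hxi
  rw [hT₃eq] at h3
  linarith

lemma hardcase (k : ℕ) (ρ : ℚ) (n : ℕ) (A : ℕ → Finset (Finset ℕ)) (e : ℕ → Finset ℕ)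
    (H0 Hq : Finset (Finset ℕ))
    (hn : 3 ≤ n)
    (hN : ∀ i < n, Nice k ρ (A i))
    (hAinj : ∀ i < n, ∀ j < n, A i = A j → i = j)
    (heinj : ∀ i < n, ∀ j < n, e i = e j → i = j)
    (hwalkA : ∀ i < n, e i ∈ A i)
    (hwalkB : ∀ i, i + 1 < n → e i ∈ A (i + 1))
    (hT : ∀ j, 1 ≤ j → j < n - 1 →
      A j ∩ Sset A j = {e (j-1)} ∧ verts (A j) ∩ verts (Sset A j) = e (j-1))
    (hH0 : H0 = A (n-1) ∩ A 0)
    (hHq1 : Hq ⊆ A (n-2)) (hHq2 : Hq ⊆ A (n-1))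
    (hHqS : ∀ x ∈ Hq, x ∉ Sset A (n-2))
    (hsplit : A (n-1) = H0 ∪ Hq)
    (hH0ne : H0.Nonempty) (hHqne : Hq.Nonempty) : False := by
  classical
  have hρ : 0 < ρ := rho_pos (hN 0 (by omega))
  set f : Finset ℕ := e (n-3) with hfdef
  have hfAq : f ∈ A (n-2) := by
    have := hwalkB (n-3) (by omega)
    have harith : n - 3 + 1 = n - 2 := by omega
    rwa [harith] at this
  have hfS : f ∈ Sset A (n-2) := mem_Sset (by omega : n - 3 < n - 2) (hwalkA (n-3) (by omega))
  have hfHq : f ∉ Hq := fun hc => hHqS f hc hfS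
  have hH0A0 : H0 ⊆ A 0 := hH0 ▸ Finset.inter_subset_right
  have hH0A : H0 ⊆ A (n-1) := hH0 ▸ Finset.inter_subset_left
  -- disjointness
  have hdisj : ∀ x ∈ H0, x ∉ Hq := by
    intro x hx hc
    exact hHqS x hc (mem_Sset (by omega : 0 < n - 2) (hH0A0 hx))
  -- cardinalities
  have hcard : (A (n-1)).card = H0.card + Hq.card := by
    rw [hsplit]
    rw [Finset.card_union_of_disjoint (Finset.disjoint_left.mpr hdisj)]
  have hverts : verts (A (n-1)) = verts H0 ∪ verts Hq := by
    rw [hsplit, verts_union]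
  have hfk : f.card = k := nice_unif (hN (n-3) (by omega)) f (hwalkA (n-3) (by omega))
  -- bound (b1)
  have hb1 : ((H0.card : ℚ)) - 1 ≤ ρ * ((((verts H0).card : ℚ)) - k) := sb_le (hN 0 (by omega)) hH0A0 hH0ne
  -- bound (b2): insert f Hq inside A (n-2)
  have hins : insert f Hq ⊆ A (n-2) := Finset.insert_subset hfAq hHq1
  have hinscard : (insert f Hq).card = Hq.card + 1 := Finset.card_insert_of_notMem hfHq
  have hinsverts : ((verts (insert f Hq)).card : ℚ) = (k : ℚ) + (((verts Hq).card : ℚ)) - (((f ∩ verts Hq).card : ℚ)) := by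
    rw [verts_insert]
    have := Finset.card_union_add_card_inter f (verts Hq)
    have hcast : ((f ∪ verts Hq).card : ℚ) + (((f ∩ verts Hq).card : ℚ)) = (f.card : ℚ) + (((verts Hq).card : ℚ)) := by
      exact_mod_cast this
    rw [hfk] at hcast
    linarith
  have hb2 : ((Hq.card : ℚ)) ≤ ρ * ((((verts Hq).card : ℚ)) - (((f ∩ verts Hq).card : ℚ))) := by
    have := sb_le (hN (n-2) (by omega)) hins ⟨f, Finset.mem_insert_self f Hq⟩
    rw [hinscard, hinsverts] at this
    push_cast at this
    linarith
  -- vertex overlap bound (b3)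
  have hFsub : verts H0 ∩ verts Hq ⊆ f ∩ verts Hq := by
    intro x hx
    obtain ⟨hx0, hxq⟩ := Finset.mem_inter.mp hx
    have hx0' : x ∈ verts (Sset A (n-2)) :=
      verts_mono (mem_Sset (by omega : 0 < n - 2)) (verts_mono hH0A0 hx0)
    have hxq' : x ∈ verts (A (n-2)) := verts_mono hHq1 hxq
    have hxe : x ∈ e (n-2-1) := by
      rw [← (hT (n-2) (by omega) (by omega)).2]
      exact Finset.mem_inter.mpr ⟨hxq', hx0'⟩
    have harith : n - 2 - 1 = n - 3 := by omega
    rw [harith] at hxe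
    exact Finset.mem_inter.mpr ⟨hxe, hxq⟩
  have hFle : ((verts H0 ∩ verts Hq).card : ℚ) ≤ (((f ∩ verts Hq).card : ℚ)) := by
    exact_mod_cast Finset.card_le_card hFsub
  have hvsum : (((verts (A (n-1))).card : ℚ)) + ((verts H0 ∩ verts Hq).card : ℚ) = (((verts H0).card : ℚ)) + (((verts Hq).card : ℚ)) := by
    rw [hverts]
    exact_mod_cast Finset.card_union_add_card_inter (verts H0) (verts Hq)
  have hvineq : (((verts H0).card : ℚ)) + (((verts Hq).card : ℚ)) - (((f ∩ verts Hq).card : ℚ)) ≤ (((verts (A (n-1))).card : ℚ)) := by linarith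
  -- density equation for A (n-1)
  have hAeq : ((H0.card : ℚ)) + ((Hq.card : ℚ)) - 1 = ρ * ((((verts (A (n-1))).card : ℚ)) - k) := by
    have := nice_eq (hN (n-1) (by omega))
    rw [hcard] at this
    push_cast at this
    linarith
  -- the equality chain
  have hchain : ρ * ((((verts H0).card : ℚ)) - k) + ρ * ((((verts Hq).card : ℚ)) - (((f ∩ verts Hq).card : ℚ))) ≤ ρ * ((((verts (A (n-1))).card : ℚ)) - k) := by nlinarith
  have hE1 : ((H0.card : ℚ)) - 1 = ρ * ((((verts H0).card : ℚ)) - k) := by linarith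
  have hE2 : ((Hq.card : ℚ)) = ρ * ((((verts Hq).card : ℚ)) - (((f ∩ verts Hq).card : ℚ))) := by linarith
  have hE3 : (((verts H0).card : ℚ)) + (((verts Hq).card : ℚ)) - (((f ∩ verts Hq).card : ℚ)) = (((verts (A (n-1))).card : ℚ)) := by nlinarith
  have hFcard : ((verts H0 ∩ verts Hq).card : ℚ) = (((f ∩ verts Hq).card : ℚ)) := by linarith
  -- H0 is a proper subgraph of A 0
  have hH0pr : H0 ⊂ A 0 := by
    refine Finset.ssubset_iff_subset_ne.mpr ⟨hH0A0, ?_⟩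
    intro hc
    have hA0sub : A 0 ⊆ A (n-1) := by
      rw [hsplit, ← hc]; exact Finset.subset_union_left
    have hA0ne : A 0 ≠ A (n-1) := fun hcc => by
      have := hAinj 0 (by omega) (n-1) (by omega) hcc; omega
    exact no_proper_nice (hN 0 (by omega)) (hN (n-1) (by omega))
      (Finset.ssubset_iff_subset_ne.mpr ⟨hA0sub, hA0ne⟩)
  -- H0 is a single edge
  have hc01 : H0.card = 1 := by
    by_contra hne1
    have h2 : 2 ≤ H0.card := by
      have := Finset.card_pos.mpr hH0ne; omega
    have := sb_lt (hN 0 (by omega)) hH0pr h2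
    linarith
  obtain ⟨h, hh⟩ := Finset.card_eq_one.mp hc01
  have hhH0 : h ∈ H0 := by rw [hh]; exact Finset.mem_singleton_self h
  have hhA : h ∈ A (n-1) := hH0A hhH0
  have hvh : verts H0 = h := by rw [hh, verts_singleton]
  have hhk : h.card = k := nice_unif (hN (n-1) (by omega)) h hhA
  -- insert f Hq = A (n-2)
  have hinseq : insert f Hq = A (n-2) := by
    by_contra hne
    have hpr : insert f Hq ⊂ A (n-2) := Finset.ssubset_iff_subset_ne.mpr ⟨hins, hne⟩
    have h2 : 2 ≤ (insert f Hq).card := by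
      rw [hinscard]
      have := Finset.card_pos.mpr hHqne; omega
    have := sb_lt (hN (n-2) (by omega)) hpr h2
    rw [hinscard, hinsverts] at this
    push_cast at this
    linarith
  -- f is not an edge of A (n-1)
  have hfA : f ∉ A (n-1) := by
    intro hc
    rw [hsplit] at hc
    rcases Finset.mem_union.mp hc with hc | hc
    · rw [hh, Finset.mem_singleton] at hc
      have : A (n-1) = A (n-2) := by
        rw [hsplit, hh, ← hc, ← Finset.insert_eq, hinseq]
      have := hAinj (n-1) (by omega) (n-2) (by omega) this
      omega
    · exact hfHq hc
  have hhf : h ≠ f := fun hc => hfA (hc ▸ hhA)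
  -- F = f ∩ verts Hq
  have hFeq : verts H0 ∩ verts Hq = f ∩ verts Hq := by
    apply Finset.eq_of_subset_of_card_le hFsub
    have : ((f ∩ verts Hq).card : ℚ) = ((verts H0 ∩ verts Hq).card : ℚ) := by
      rw [hFcard]
    exact_mod_cast le_of_eq this
  -- (((f ∩ verts Hq).card : ℚ)) ≤ k
  have hbk : (((f ∩ verts Hq).card : ℚ)) ≤ (k : ℚ) := by
    have : (f ∩ verts Hq).card ≤ f.card := Finset.card_le_card Finset.inter_subset_left
    rw [hfk] at this
    exact_mod_cast this
  -- case (((f ∩ verts Hq).card : ℚ)) = k leads to h = f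
  by_cases hbkeq : (f ∩ verts Hq).card = k
  · have hsub1 : f ∩ verts Hq ⊆ h := by
      rw [← hFeq, ← hvh]; exact Finset.inter_subset_left
    have : f ∩ verts Hq = h := Finset.eq_of_subset_of_card_le hsub1 (by omega)
    have hfh : f = h := by
      have hsub2 : f ∩ verts Hq ⊆ f := Finset.inter_subset_left
      rw [this] at hsub2
      exact (Finset.eq_of_subset_of_card_le hsub2 (by omega)).symm
    exact hhf hfh.symm
  · -- (((f ∩ verts Hq).card : ℚ)) < k
    have hblt : (((f ∩ verts Hq).card : ℚ)) < (k : ℚ) := by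
      rcases lt_or_eq_of_le hbk with h | h
      · exact h
      · exfalso; apply hbkeq; exact_mod_cast h
    -- Hq proper in A (n-1)
    have hHqpr : Hq ⊂ A (n-1) := by
      refine Finset.ssubset_iff_subset_ne.mpr ⟨hHq2, ?_⟩
      intro hc
      exact hdisj h hhH0 (hc ▸ hhA)
    have hcq2 : 2 ≤ Hq.card := by
      have h3 : 3 ≤ (A (n-2)).card := nice_card (hN (n-2) (by omega))
      rw [← hinseq, hinscard] at h3
      omega
    have hstrict := sb_lt (hN (n-1) (by omega)) hHqpr hcq2
    have hkb1 : ρ * ((k:ℚ) - (((f ∩ verts Hq).card : ℚ))) < 1 := by linarith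
    -- the interface chain
    have hFh : verts H0 ∩ verts Hq ⊆ h := by rw [hvh]; exact Finset.inter_subset_left
    have hchainF : ∀ i, i ≤ n - 3 → verts H0 ∩ verts Hq ⊆ e (n - 3 - i) := by
      intro i
      induction i with
      | zero =>
        intro _
        have hgoal : verts H0 ∩ verts Hq ⊆ f := by
          rw [hFeq]; exact Finset.inter_subset_left
        simpa [hfdef] using hgoal
      | succ p ihp =>
        intro hp
        have hprev := ihp (by omega)
        intro x hx
        have hl1 : 1 ≤ n - 3 - p := by omega
        set l := n - 3 - p with hldef
        have hxl : x ∈ verts (A l) := subset_verts (hwalkA l (by omega)) (hprev hx)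
        have hxS : x ∈ verts (Sset A l) :=
          verts_mono (mem_Sset (by omega : 0 < l))
            (verts_mono hH0A0 (Finset.mem_inter.mp hx).1)
        have hxe : x ∈ e (l - 1) := by
          rw [← (hT l (by omega) (by omega)).2]
          exact Finset.mem_inter.mpr ⟨hxl, hxS⟩
        have harith : l - 1 = n - 3 - (p + 1) := by omega
        rwa [harith] at hxe
    -- final contradiction via a pair of edges
    by_cases hhe0 : h = e 0
    · -- h = e 0; use the pair (e 0, e 1) in A 1
      have hq2 : 2 ≤ n - 2 := by
        by_contra hq1
        have : n = 3 := by omega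
        subst this
        exact hhf (hhe0.trans rfl)
      have hF0 : verts H0 ∩ verts Hq ⊆ e 0 := by rw [← hhe0]; exact hFh
      have hF1 : verts H0 ∩ verts Hq ⊆ e 1 := by
        have := hchainF (n - 4) (by omega)
        have harith : n - 3 - (n - 4) = 1 := by omega
        rwa [harith] at this
      have he01 : e 0 ≠ e 1 := fun hc => by
        have := heinj 0 (by omega) 1 (by omega) hc; omega
      have hpb := pair_bound (hN 1 (by omega)) (hwalkB 0 (by omega)) (hwalkA 1 (by omega)) he01
      have hble : (((f ∩ verts Hq).card : ℚ)) ≤ ((e 0 ∩ e 1).card : ℚ) := by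
        rw [← hFcard]
        exact_mod_cast Finset.card_le_card
          (Finset.subset_inter hF0 hF1)
      have hmono := mul_le_mul_of_nonneg_left
        (by linarith : (k:ℚ) - ((e 0 ∩ e 1).card : ℚ) ≤ (k:ℚ) - (((f ∩ verts Hq).card : ℚ)))
        hρ.le
      linarith
    · -- h ≠ e 0; use the pair (h, e 0) in A 0
      have hF0 : verts H0 ∩ verts Hq ⊆ e 0 := by
        have := hchainF (n - 3) (by omega)
        have harith : n - 3 - (n - 3) = 0 := by omega
        rwa [harith] at this
      have hpb := pair_bound (hN 0 (by omega)) (hH0A0 hhH0) (hwalkA 0 (by omega)) hhe0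
      have hble : (((f ∩ verts Hq).card : ℚ)) ≤ ((h ∩ e 0).card : ℚ) := by
        rw [← hFcard]
        exact_mod_cast Finset.card_le_card (Finset.subset_inter hFh hF0)
      have hmono := mul_le_mul_of_nonneg_left
        (by linarith : (k:ℚ) - ((h ∩ e 0).card : ℚ) ≤ (k:ℚ) - (((f ∩ verts Hq).card : ℚ)))
        hρ.le
      linarith

lemma core (k : ℕ) (ρ : ℚ) : ∀ n, 2 ≤ n → ∀ (A : ℕ → Finset (Finset ℕ)) (e : ℕ → Finset ℕ),
    (∀ i < n, Nice k ρ (A i)) →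
    (∀ i < n, ∀ j < n, A i = A j → i = j) →
    (∀ i < n, ∀ j < n, e i = e j → i = j) →
    (∀ i < n, e i ∈ A i ∧ e i ∈ A ((i + 1) % n)) →
    0 < EE k ρ ((Finset.range n).biUnion A) := by
  intro n
  induction n using Nat.strong_induction_on with
  | _ n IH =>
  intro hn A e hN hAinj heinj hwalk
  by_contra hcon'
  push_neg at hcon'
  have hcon : EE k ρ (Sset A n) ≤ 0 := hcon'
  clear hcon'
  have hwalkA : ∀ i < n, e i ∈ A i := fun i hi => (hwalk i hi).1
  have hwalkB : ∀ i, i + 1 < n → e i ∈ A (i + 1) := by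
    intro i h
    have := (hwalk i (by omega)).2
    rwa [Nat.mod_eq_of_lt h] at this
  have hwalk0 : e (n-1) ∈ A 0 := by
    have := (hwalk (n-1) (by omega)).2
    rw [Nat.sub_add_cancel (by omega : 1 ≤ n), Nat.mod_self] at this
    exact this
  -- shares
  have hshare : ∀ j, 1 ≤ j → j < n → e (j-1) ∈ A j ∩ Sset A j := by
    intro j h1 h2
    refine Finset.mem_inter.mpr ⟨?_, mem_Sset (by omega) (hwalkA (j-1) (by omega))⟩
    have := hwalkB (j-1) (by omega)
    rwa [Nat.sub_add_cancel h1] at this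
  -- EE of S1 is zero
  have hS1 : Sset A 1 = A 0 := by
    unfold Sset; rw [Finset.range_one, Finset.singleton_biUnion]
  have hEE1 : EE k ρ (Sset A 1) = 0 := by
    rw [hS1]; unfold EE; have := nice_eq (hN 0 (by omega)); linarith
  -- monotonicity
  have hmono : ∀ j, 1 ≤ j → j < n → EE k ρ (Sset A j) ≤ EE k ρ (Sset A (j+1)) := by
    intro j h1 h2
    rw [Sset_succ]
    exact step_ge (hN j h2) ⟨e (j-1), hshare j h1 h2⟩
  have hup : ∀ i j, 1 ≤ j → j + i ≤ n → EE k ρ (Sset A j) ≤ EE k ρ (Sset A (j+i)) := by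
    intro i
    induction i with
    | zero => intro j _ _; exact le_refl _
    | succ p ihp =>
      intro j h1 h2
      have h3 := ihp j h1 (by omega)
      have h4 := hmono (j+p) (by omega) (by omega)
      have : j + (p+1) = (j+p) + 1 := by omega
      rw [this]
      linarith
  have hzero : ∀ j, 1 ≤ j → j ≤ n → EE k ρ (Sset A j) = 0 := by
    intro j h1 h2
    have ha : EE k ρ (Sset A 1) ≤ EE k ρ (Sset A j) := by
      have := hup (j-1) 1 (le_refl _) (by omega)
      rwa [Nat.add_sub_cancel' h1] at this
    have hb : EE k ρ (Sset A j) ≤ EE k ρ (Sset A n) := by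
      have := hup (n-j) j h1 (by omega)
      rwa [Nat.add_sub_cancel' h2] at this
    rw [hEE1] at ha
    linarith
  -- extraction
  have hext : ∀ j, 1 ≤ j → j < n → A j ⊆ Sset A j ∨
      (A j ∩ Sset A j = {e (j-1)} ∧ verts (A j) ∩ verts (Sset A j) = e (j-1)) := by
    intro j h1 h2
    have hz : EE k ρ (Sset A j ∪ A j) = EE k ρ (Sset A j) := by
      rw [← Sset_succ, hzero (j+1) (by omega) (by omega), hzero j h1 (by omega)]
    exact extract (hN j h2) hz (hshare j h1 h2)
  -- existence of a contained graph
  have hcontain : ∃ j, 1 ≤ j ∧ j < n ∧ A j ⊆ Sset A j := by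
    refine ⟨n-1, by omega, by omega, ?_⟩
    rcases hext (n-1) (by omega) (by omega) with h | ⟨h1, -⟩
    · exact h
    · exfalso
      have hmem : e (n-1) ∈ A (n-1) ∩ Sset A (n-1) :=
        Finset.mem_inter.mpr ⟨hwalkA (n-1) (by omega), mem_Sset (by omega) hwalk0⟩
      rw [h1, Finset.mem_singleton] at hmem
      have := heinj (n-1) (by omega) (n-1-1) (by omega) hmem
      omega
  classical
  set m := Nat.find hcontain with hmdef
  have hspec := Nat.find_spec hcontain
  rw [← hmdef] at hspec
  obtain ⟨hm1, hmn, hmsub⟩ := hspec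
  have hmmin : ∀ j, j < m → ¬(1 ≤ j ∧ j < n ∧ A j ⊆ Sset A j) :=
    fun j hj => Nat.find_min hcontain hj
  have hT : ∀ j, 1 ≤ j → j < m →
      A j ∩ Sset A j = {e (j-1)} ∧ verts (A j) ∩ verts (Sset A j) = e (j-1) := by
    intro j h1 h2
    rcases hext j h1 (by omega) with h | h
    · exact absurd ⟨h1, by omega, h⟩ (hmmin j h2)
    · exact h
  -- decomposition of A m
  set Hj : ℕ → Finset (Finset ℕ) := fun j => (A m ∩ A j) \ Sset A j with hHjdef
  have hHsubm : ∀ j, Hj j ⊆ A m := fun j x hx =>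
    (Finset.mem_inter.mp (Finset.mem_sdiff.mp hx).1).1
  have hHsubj : ∀ j, Hj j ⊆ A j := fun j x hx =>
    (Finset.mem_inter.mp (Finset.mem_sdiff.mp hx).1).2
  have hHS : ∀ j, ∀ x ∈ Hj j, x ∉ Sset A j := fun j x hx =>
    (Finset.mem_sdiff.mp hx).2
  have hcover : ∀ x ∈ A m, ∃ j, j < m ∧ x ∈ Hj j := by
    intro x hx
    obtain ⟨j0, hj0, hxj0⟩ := Finset.mem_biUnion.mp (hmsub hx)
    rw [Finset.mem_range] at hj0
    have hex : ∃ j, x ∈ A j := ⟨j0, hxj0⟩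
    refine ⟨Nat.find hex, by have := Nat.find_le (h := hex) hxj0; omega, ?_⟩
    rw [hHjdef]
    refine Finset.mem_sdiff.mpr ⟨Finset.mem_inter.mpr ⟨hx, Nat.find_spec hex⟩, ?_⟩
    intro hc
    obtain ⟨i, hi, hxi⟩ := Finset.mem_biUnion.mp hc
    rw [Finset.mem_range] at hi
    exact Nat.find_min hex hi hxi
  set J : Finset ℕ := (Finset.range m).filter (fun j => (Hj j).Nonempty) with hJdef
  have hJne : J.Nonempty := by
    have h3 : 3 ≤ (A m).card := nice_card (hN m hmn)
    have hpos : 0 < (A m).card := by omega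
    obtain ⟨x, hx⟩ := Finset.card_pos.mp hpos
    obtain ⟨j, hjm, hxj⟩ := hcover x hx
    exact ⟨j, Finset.mem_filter.mpr ⟨Finset.mem_range.mpr hjm, ⟨x, hxj⟩⟩⟩
  set j₁ := J.min' hJne with hj₁def
  have hj₁J : j₁ ∈ J := J.min'_mem hJne
  have hj₁m : j₁ < m := Finset.mem_range.mp (Finset.mem_filter.mp hj₁J).1
  have hj₁ne : (Hj j₁).Nonempty := (Finset.mem_filter.mp hj₁J).2
  by_cases hJsing : ∀ j ∈ J, j = j₁
  · -- single part: A m ⊆ A j₁, contradiction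
    have hsub : A m ⊆ A j₁ := by
      intro x hx
      obtain ⟨j, hjm, hxj⟩ := hcover x hx
      have hjJ : j ∈ J := Finset.mem_filter.mpr ⟨Finset.mem_range.mpr hjm, ⟨x, hxj⟩⟩
      rw [hJsing j hjJ] at hxj
      exact hHsubj j₁ hxj
    have hne : A m ≠ A j₁ := fun hc => by
      have := hAinj m hmn j₁ (by omega) hc; omega
    exact no_proper_nice (hN m hmn) (hN j₁ (by omega))
      (Finset.ssubset_iff_subset_ne.mpr ⟨hsub, hne⟩)
  · push_neg at hJsing
    obtain ⟨j', hj'J, hj'ne⟩ := hJsing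
    have hJ'ne : (J.erase j₁).Nonempty := ⟨j', Finset.mem_erase.mpr ⟨hj'ne, hj'J⟩⟩
    set j₂ := (J.erase j₁).min' hJ'ne with hj₂def
    have hj₂J' : j₂ ∈ J.erase j₁ := (J.erase j₁).min'_mem hJ'ne
    have hj₂J : j₂ ∈ J := (Finset.mem_erase.mp hj₂J').2
    have hj₂nej₁ : j₂ ≠ j₁ := (Finset.mem_erase.mp hj₂J').1
    have hj₂m : j₂ < m := Finset.mem_range.mp (Finset.mem_filter.mp hj₂J).1
    have hj₁lt : j₁ < j₂ := lt_of_le_of_ne (J.min'_le j₂ hj₂J) (Ne.symm hj₂nej₁)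
    have hj₂ne : (Hj j₂).Nonempty := (Finset.mem_filter.mp hj₂J).2
    obtain ⟨f'', hf''⟩ := hj₂ne
    have hJlb : ∀ j ∈ J, j ≠ j₁ → j₂ ≤ j := fun j hj hne =>
      (J.erase j₁).min'_le j (Finset.mem_erase.mpr ⟨hne, hj⟩)
    -- facts about f''
    have hf''2 : f'' ∈ A j₂ := hHsubj j₂ hf''
    have hf''m : f'' ∈ A m := hHsubm j₂ hf''
    have hf''S : f'' ∉ Sset A j₂ := hHS j₂ f'' hf''
    by_cases hR1 : e j₁ ∈ Hj j₁
    · -- reducible, cycle (A (j₁+1), ..., A j₂, A m)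
      refine reduce k ρ n m j₂ (j₁+1) A e (e j₁) f'' IH hN hAinj heinj hwalkA hwalkB
        hmn (by omega) hj₂m (by omega) (hHsubm j₁ hR1) ?_ hf''2 hf''m hf''S ?_ ?_ hcon
      · exact hwalkB j₁ (by omega)
      · exact mem_Sset (by omega) (hwalkA j₁ (by omega))
      · intro l hl1 hl2 hc
        have := heinj j₁ (by omega) l (by omega) hc
        omega
    · obtain ⟨f', hf'⟩ := hj₁ne
      have hf'nej₁ : f' ≠ e j₁ := fun hc => hR1 (hc ▸ hf')
      have hf'm : f' ∈ A m := hHsubm j₁ hf'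
      have hf'c : f' ∈ A j₁ := hHsubj j₁ hf'
      have hf'S : f' ∈ Sset A j₂ := mem_Sset hj₁lt hf'c
      have hf'ne : ∀ l, j₁ ≤ l → l < j₂ → f' ≠ e l := by
        intro l hl1 hl2 hc
        rcases Nat.eq_or_lt_of_le hl1 with rfl | hlt
        · exact hf'nej₁ hc
        · -- l > j₁ : e l ∈ A l ∩ S l = {e (l-1)}, but f' ∈ S l
          have hfS : f' ∈ Sset A l := mem_Sset hlt hf'c
          have hel : e l ∈ A l ∩ Sset A l := by
            refine Finset.mem_inter.mpr ⟨hwalkA l (by omega), ?_⟩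
            rw [← hc]; exact hfS
          rw [(hT l (by omega) (by omega)).1, Finset.mem_singleton] at hel
          have := heinj l (by omega) (l-1) (by omega) hel
          omega
      by_cases hred : j₂ - j₁ + 2 < n
      · exact reduce k ρ n m j₂ j₁ A e f' f'' IH hN hAinj heinj hwalkA hwalkB
          hmn (by omega) hj₂m hred hf'm hf'c hf''2 hf''m hf''S hf'S hf'ne hcon
      · -- hard case: j₁ = 0, j₂ = n-2, m = n-1
        have hj₁0 : j₁ = 0 := by omega
        have hj₂q : j₂ = n - 2 := by omega
        have hmq : m = n - 1 := by omega
        have hn3 : 3 ≤ n := by omega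
        -- J = {j₁, j₂}
        have hsplit : A m = Hj j₁ ∪ Hj j₂ := by
          apply Finset.Subset.antisymm
          · intro x hx
            obtain ⟨j, hjm, hxj⟩ := hcover x hx
            have hjJ : j ∈ J := Finset.mem_filter.mpr ⟨Finset.mem_range.mpr hjm, ⟨x, hxj⟩⟩
            rcases eq_or_ne j j₁ with rfl | hne
            · exact Finset.mem_union_left _ hxj
            · have h2 := hJlb j hjJ hne
              have : j = j₂ := by omega
              exact Finset.mem_union_right _ (this ▸ hxj)
          · exact Finset.union_subset (hHsubm j₁) (hHsubm j₂)
        have hH0eq : Hj j₁ = A m ∩ A j₁ := by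
          rw [hHjdef]
          simp [hj₁0, Sset]
        refine hardcase k ρ n A e (Hj j₁) (Hj j₂) hn3 hN hAinj heinj hwalkA hwalkB
          ?_ ?_ ?_ ?_ ?_ ?_ ⟨f', hf'⟩ ⟨f'', hf''⟩
        · intro j h1 h2; exact hT j h1 (by omega)
        · rw [hH0eq, hmq, hj₁0]
        · rw [← hj₂q]; exact hHsubj j₂
        · rw [← hmq]; exact hHsubm j₂
        · rw [← hj₂q]; exact hHS j₂
        · rw [← hmq]; exact hsplit

theorem cyclic_walk_dense
    (k : ℕ) (hk : 2 ≤ k) (ρ : ℚ) (n : ℕ)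
    (A : ℕ → Finset (Finset ℕ))
    (hunif : ∀ i < n, ∀ e ∈ A i, e.card = k)
    (hsb : ∀ i < n, StrictlyKBalanced k (A i))
    (hd : ∀ i < n, kdens k (A i) = ρ)
    (hwalk : IsSACW n A)
    (S : Finset (Finset ℕ)) (hS : S = (Finset.range n).biUnion A) :
    ∃ e ∈ S, ρ < ((S.card : ℚ) - 1) / (((verts S).card : ℚ) - (k : ℚ)) := by
  obtain ⟨hn2, hAinj, e, heinj, hwalkAB⟩ := hwalk
  have hN : ∀ i < n, Nice k ρ (A i) := fun i hi =>
    nice_of (hunif i hi) (hsb i hi) (hd i hi)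
  have hpos := core k ρ n hn2 A e hN hAinj heinj hwalkAB
  rw [← hS] at hpos
  have hA0S : A 0 ⊆ S := by
    rw [hS]
    exact fun x hx => Finset.mem_biUnion.mpr ⟨0, Finset.mem_range.mpr (by omega), hx⟩
  refine ⟨e 0, hA0S (hwalkAB 0 (by omega)).1, ?_⟩
  have hv : k + 1 ≤ (verts S).card := by
    have h1 : k + 1 ≤ (verts (A 0)).card := (hN 0 (by omega)).2.2.2.2
    have h2 : verts (A 0) ⊆ verts S := verts_mono hA0S
    exact le_trans h1 (Finset.card_le_card h2)
  have hvq : (0:ℚ) < ((verts S).card : ℚ) - (k : ℚ) := by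
    have : (k:ℚ) + 1 ≤ ((verts S).card : ℚ) := by exact_mod_cast hv
    linarith
  rw [lt_div_iff₀ hvq]
  unfold EE at hpos
  linarith
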